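/- Under the DSMT setup, the initial tracking variable y_0 = (1−β)g_0 satisfies E[‖Πy_0‖²] ≤ (1−β)² · { 2nC(f(x̄_0) − f^*) + 2nCσ_f^* + nσ² + 2L(L+C)‖Πx_0‖² + 2∑_{i=1}^n ‖∇f_i(x̄_0)‖² }. -/

import Mathlib

open MeasureTheory Finset ProbabilityTheory
open scoped RealInnerProductSpace

noncomputable section

/-- Points live in `ℝ^p` (Euclidean space). -/
abbrev Vec (p : ℕ) := EuclideanSpace ℝ (Fin p)

/-- A stacked variable: one row (point of `ℝ^p`) per agent. -/
abbrev Stacked (n p : ℕ) := Fin n → Vec p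

/-- Average of the rows of a stacked variable. -/
def rowAvg {n p : ℕ} (X : Stacked n p) : Vec p := (n : ℝ)⁻¹ • ∑ i, X i

/-- Squared Frobenius norm of a stacked variable. -/
def fro2 {n p : ℕ} (X : Stacked n p) : ℝ := ∑ i, ‖X i‖ ^ 2

/-- Consensus error `Π X`: row `i` is `Xᵢ − X̄`. -/
def consErr {n p : ℕ} (X : Stacked n p) : Stacked n p := fun i => X i - rowAvg X

/-! ### Auxiliary lemmas -/

lemma hasDerivAt_line {q : ℕ} (f : Vec q → ℝ) (hf : Differentiable ℝ f) (y d : Vec q) (t : ℝ) :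
    HasDerivAt (fun s : ℝ => f (y + s • d)) ⟪gradient f (y + t • d), d⟫ t := by
  have hc : HasDerivAt (fun s : ℝ => y + s • d) d t := by
    simpa using ((hasDerivAt_id t).smul_const d).const_add y
  have h2 := ((hf (y + t • d)).hasGradientAt.hasFDerivAt).comp_hasDerivAt t hc
  simpa [InnerProductSpace.toDual_apply_apply, Function.comp_def] using h2

lemma descent_lemma {q : ℕ} (L : ℝ) (hL : 0 < L) (f : Vec q → ℝ)
    (hf : Differentiable ℝ f)
    (hs : ∀ v v', ‖gradient f v - gradient f v'‖ ≤ L * ‖v - v'‖)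
    (x y : Vec q) :
    f x ≤ f y + ⟪gradient f y, x - y⟫ + L / 2 * ‖x - y‖ ^ 2 := by
  set d := x - y with hd
  set h : ℝ → ℝ := fun t => f (y + t • d) - t * ⟪gradient f y, d⟫ - L / 2 * ‖d‖ ^ 2 * t ^ 2 with hh
  have hder : ∀ t : ℝ, HasDerivAt h
      (⟪gradient f (y + t • d), d⟫ - ⟪gradient f y, d⟫ - L * ‖d‖ ^ 2 * t) t := by
    intro t
    have h1 := hasDerivAt_line f hf y d t
    have h2 : HasDerivAt (fun t : ℝ => t * ⟪gradient f y, d⟫) ⟪gradient f y, d⟫ t := by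
      simpa using (hasDerivAt_id t).mul_const ⟪gradient f y, d⟫
    have h3 : HasDerivAt (fun t : ℝ => L / 2 * ‖d‖ ^ 2 * t ^ 2) (L * ‖d‖ ^ 2 * t) t := by
      have := (hasDerivAt_pow 2 t).const_mul (L / 2 * ‖d‖ ^ 2)
      refine this.congr_deriv ?_
      ring
    exact (h1.sub h2).sub h3
  have hanti : AntitoneOn h (Set.Icc (0:ℝ) 1) := by
    apply antitoneOn_of_deriv_nonpos (convex_Icc 0 1)
    · exact (Continuous.continuousOn (by
        have : ∀ t, DifferentiableAt ℝ h t := fun t => (hder t).differentiableAt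
        exact Differentiable.continuous (fun t => this t)))
    · intro t ht
      exact ((hder t).differentiableAt).differentiableWithinAt
    · intro t ht
      rw [(hder t).deriv]
      rw [interior_Icc] at ht
      have hip : ⟪gradient f (y + t • d) - gradient f y, d⟫ ≤ L * ‖d‖ ^ 2 * t := by
        calc ⟪gradient f (y + t • d) - gradient f y, d⟫
            ≤ ‖gradient f (y + t • d) - gradient f y‖ * ‖d‖ := real_inner_le_norm _ _
          _ ≤ (L * ‖(y + t • d) - y‖) * ‖d‖ := by
              have := hs (y + t • d) y
              have hdn : (0:ℝ) ≤ ‖d‖ := norm_nonneg _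
              nlinarith [norm_nonneg (gradient f (y + t • d) - gradient f y)]
          _ = L * ‖d‖ ^ 2 * t := by
              have : ‖(y + t • d) - y‖ = t * ‖d‖ := by
                rw [add_sub_cancel_left, norm_smul, Real.norm_eq_abs, abs_of_pos ht.1]
              rw [this]; ring
      rw [inner_sub_left] at hip
      linarith
  have h10 : h 1 ≤ h 0 := hanti (by norm_num) (by norm_num) (by norm_num)
  have e0 : h 0 = f y := by simp [hh]
  have e1 : h 1 = f x - ⟪gradient f y, d⟫ - L / 2 * ‖d‖ ^ 2 := by
    simp [hh, hd]
  rw [e0, e1] at h10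
  linarith

lemma grad_sq_le {q : ℕ} (L : ℝ) (hL : 0 < L) (f : Vec q → ℝ)
    (hf : Differentiable ℝ f)
    (hs : ∀ v v', ‖gradient f v - gradient f v'‖ ≤ L * ‖v - v'‖)
    (fs : ℝ) (hfs : ∀ v, fs ≤ f v) (y : Vec q) :
    ‖gradient f y‖ ^ 2 ≤ 2 * L * (f y - fs) := by
  have hdes := descent_lemma L hL f hf hs (y - L⁻¹ • gradient f y) y
  have h1 : (y - L⁻¹ • gradient f y) - y = -(L⁻¹ • gradient f y) := by abel
  rw [h1] at hdes
  have h2 : ⟪gradient f y, -(L⁻¹ • gradient f y)⟫ = -(L⁻¹ * ‖gradient f y‖ ^ 2) := by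
    rw [inner_neg_right, real_inner_smul_right, real_inner_self_eq_norm_sq]
  have h3 : ‖-(L⁻¹ • gradient f y)‖ ^ 2 = L⁻¹ ^ 2 * ‖gradient f y‖ ^ 2 := by
    rw [norm_neg, norm_smul, Real.norm_eq_abs, abs_of_pos (inv_pos.mpr hL), mul_pow]
  rw [h2, h3] at hdes
  have h4 := hfs (y - L⁻¹ • gradient f y)
  have hLinv : L * L⁻¹ = 1 := mul_inv_cancel₀ hL.ne'
  have e : L / 2 * (L⁻¹ ^ 2 * ‖gradient f y‖ ^ 2) = L⁻¹ * ‖gradient f y‖ ^ 2 / 2 := by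
    field_simp
  rw [e] at hdes
  have key : L⁻¹ * ‖gradient f y‖ ^ 2 ≤ 2 * (f y - fs) := by linarith
  have e2 : ‖gradient f y‖ ^ 2 = L * (L⁻¹ * ‖gradient f y‖ ^ 2) := by
    rw [← mul_assoc, hLinv, one_mul]
  rw [e2]
  calc L * (L⁻¹ * ‖gradient f y‖ ^ 2) ≤ L * (2 * (f y - fs)) :=
        mul_le_mul_of_nonneg_left key hL.le
    _ = 2 * L * (f y - fs) := by ring

lemma fval_bound {q : ℕ} (L : ℝ) (hL : 0 < L) (f : Vec q → ℝ)
    (hf : Differentiable ℝ f)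
    (hs : ∀ v v', ‖gradient f v - gradient f v'‖ ≤ L * ‖v - v'‖)
    (fs : ℝ) (hfs : ∀ v, fs ≤ f v) (x y : Vec q) :
    f x - fs ≤ 2 * (f y - fs) + L * ‖x - y‖ ^ 2 := by
  have hdes := descent_lemma L hL f hf hs x y
  have hip : ⟪gradient f y, x - y⟫ ≤ ‖gradient f y‖ * ‖x - y‖ := real_inner_le_norm _ _
  have hg := grad_sq_le L hL f hf hs fs hfs y
  have h1 : 2 * L * (‖gradient f y‖ * ‖x - y‖) ≤
      ‖gradient f y‖ ^ 2 + L ^ 2 * ‖x - y‖ ^ 2 := by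
    nlinarith [sq_nonneg (‖gradient f y‖ - L * ‖x - y‖)]
  have h2 : 2 * L * (⟪gradient f y, x - y⟫) ≤ 2 * L * ((f y - fs) + L / 2 * ‖x - y‖ ^ 2) := by
    have h3 : 2 * L * (⟪gradient f y, x - y⟫) ≤ 2 * L * (‖gradient f y‖ * ‖x - y‖) :=
      mul_le_mul_of_nonneg_left hip (by linarith)
    nlinarith
  have h4 : ⟪gradient f y, x - y⟫ ≤ (f y - fs) + L / 2 * ‖x - y‖ ^ 2 :=
    le_of_mul_le_mul_left (by linarith) (by linarith : (0:ℝ) < 2 * L)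
  linarith

lemma grad_diff_sq {q : ℕ} (L : ℝ) (f : Vec q → ℝ)
    (hs : ∀ v v', ‖gradient f v - gradient f v'‖ ≤ L * ‖v - v'‖) (x y : Vec q) :
    ‖gradient f x‖ ^ 2 ≤ 2 * L ^ 2 * ‖x - y‖ ^ 2 + 2 * ‖gradient f y‖ ^ 2 := by
  have h1 : ‖gradient f x‖ ≤ ‖gradient f x - gradient f y‖ + ‖gradient f y‖ := by
    have := norm_add_le (gradient f x - gradient f y) (gradient f y)
    simpa using this
  have h2 := hs x y
  nlinarith [norm_nonneg (gradient f x), norm_nonneg (gradient f y),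
    norm_nonneg (gradient f x - gradient f y), norm_nonneg (x - y),
    sq_nonneg (‖gradient f x - gradient f y‖ - ‖gradient f y‖)]

lemma second_moment {Ω : Type} [MeasurableSpace Ω] (μ : Measure Ω) [IsProbabilityMeasure μ]
    {q : ℕ} (g : Ω → Vec q) (hg : MemLp g 2 μ) (m : Vec q) (hm : (∫ ω, g ω ∂μ) = m) :
    (∫ ω, ‖g ω‖ ^ 2 ∂μ) = (∫ ω, ‖g ω - m‖ ^ 2 ∂μ) + ‖m‖ ^ 2 := by
  have hgm : MemLp (fun ω => g ω - m) 2 μ := hg.sub (memLp_const m)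
  have hi1 : Integrable (fun ω => ‖g ω - m‖ ^ 2) μ :=
    (memLp_two_iff_integrable_sq_norm hgm.aestronglyMeasurable).mp hgm
  have hint : Integrable (fun ω => g ω - m) μ := hgm.integrable one_le_two
  have hzero : (∫ ω, g ω - m ∂μ) = 0 := by
    rw [integral_sub (hg.integrable one_le_two) (integrable_const m), hm, integral_const]
    simp
  have hinner : (∫ ω, ⟪m, g ω - m⟫ ∂μ) = 0 := by
    rw [integral_inner hint m, hzero, inner_zero_right]
  have hi2 : Integrable (fun ω => ⟪m, g ω - m⟫) μ := hint.const_inner m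
  have hpt : ∀ ω, ‖g ω‖ ^ 2 = ‖g ω - m‖ ^ 2 + 2 * ⟪m, g ω - m⟫ + ‖m‖ ^ 2 := by
    intro ω
    have h1 := norm_add_sq_real (g ω - m) m
    have h2 : g ω - m + m = g ω := by abel
    rw [h2] at h1
    have h3 := real_inner_comm (g ω - m) m
    linarith
  calc (∫ ω, ‖g ω‖ ^ 2 ∂μ)
      = ∫ ω, (‖g ω - m‖ ^ 2 + 2 * ⟪m, g ω - m⟫ + ‖m‖ ^ 2) ∂μ := by
        congr 1; funext ω; exact hpt ω
    _ = (∫ ω, ‖g ω - m‖ ^ 2 ∂μ) + (∫ ω, 2 * ⟪m, g ω - m⟫ ∂μ) + (∫ ω, ‖m‖ ^ 2 ∂μ) := by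
        have hA : Integrable (fun ω => ‖g ω - m‖ ^ 2 + 2 * ⟪m, g ω - m⟫) μ :=
          hi1.add (hi2.const_mul 2)
        rw [integral_add hA (integrable_const _), integral_add hi1 (hi2.const_mul 2)]
    _ = (∫ ω, ‖g ω - m‖ ^ 2 ∂μ) + ‖m‖ ^ 2 := by
        rw [integral_const_mul, hinner, integral_const]
        simp

lemma fro2_consErr_le {n p : ℕ} (X : Stacked n p) : fro2 (consErr X) ≤ fro2 X := by
  rcases Nat.eq_zero_or_pos n with h | h
  · subst h; simp [fro2]
  have hn : (n : ℝ) ≠ 0 := Nat.cast_ne_zero.mpr h.ne'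
  set m := rowAvg X with hm
  have hsum : (∑ i, X i) = (n : ℝ) • m := by
    rw [hm, rowAvg, smul_smul, mul_inv_cancel₀ hn, one_smul]
  have hexp : fro2 (consErr X) = fro2 X - 2 * ⟪∑ i, X i, m⟫ + (n : ℝ) * ‖m‖ ^ 2 := by
    unfold fro2 consErr
    rw [sum_inner]
    have h1 : ∀ i : Fin n, ‖X i - m‖ ^ 2 = ‖X i‖ ^ 2 - 2 * ⟪X i, m⟫ + ‖m‖ ^ 2 := by
      intro i
      have h2 := norm_sub_sq_real (X i) m
      have h3 := real_inner_comm (X i) m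
      linarith
    rw [Finset.sum_congr rfl (fun i _ => h1 i)]
    rw [Finset.sum_add_distrib, Finset.sum_sub_distrib, Finset.sum_const, ← Finset.mul_sum,
      Finset.card_univ, Fintype.card_fin, nsmul_eq_mul]
  have hnn : (0:ℝ) ≤ (n : ℝ) * ‖m‖ ^ 2 :=
    mul_nonneg (Nat.cast_nonneg n) (sq_nonneg _)
  rw [hexp, hsum, real_inner_smul_left, real_inner_self_eq_norm_sq]
  nlinarith [hnn]

lemma fro2_nonneg {n p : ℕ} (X : Stacked n p) : 0 ≤ fro2 X :=
  Finset.sum_nonneg fun i _ => sq_nonneg _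

/-- bound on `E[‖Π y₀‖²]` for the initial tracking variable
`y₀ = (1 − β) g₀`, where the initial stochastic gradients satisfy the ABC
condition, independently across agents. -/
theorem initial_tracking_bound (n p : ℕ) (hn : 0 < n) (hp : 0 < p)
    (L C σ β : ℝ) (hL : 0 < L) (hC : 0 ≤ C) (hσ : 0 ≤ σ) (hβ0 : 0 < β) (hβ1 : β < 1)
    -- objective functions
    (f : Fin n → Vec p → ℝ)
    (hdiff : ∀ i, Differentiable ℝ (f i))
    (hsmooth : ∀ i v v', ‖gradient (f i) v - gradient (f i) v'‖ ≤ L * ‖v - v'‖)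
    (fStar : Fin n → ℝ) (hfStar : ∀ i, IsGLB (Set.range (f i)) (fStar i))
    (F : Vec p → ℝ) (hF : ∀ v, F v = (n : ℝ)⁻¹ * ∑ i, f i v)
    (Fstar : ℝ) (hFstar : IsGLB (Set.range F) Fstar)
    (sigf : ℝ) (hsigf : sigf = Fstar - (n : ℝ)⁻¹ * ∑ i, fStar i)
    -- probability space, initial point and initial stochastic gradients
    {Ω : Type} [MeasurableSpace Ω] (μ : Measure Ω) [IsProbabilityMeasure μ]
    (x0 : Stacked n p) (g0 : Ω → Stacked n p)
    (hg_L2 : ∀ i, MemLp (fun ω => g0 ω i) 2 μ)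
    (habc_mean : ∀ i, (∫ ω, g0 ω i ∂μ) = gradient (f i) (x0 i))
    (habc_var : ∀ i,
      (∫ ω, ‖g0 ω i - gradient (f i) (x0 i)‖ ^ 2 ∂μ) ≤ C * (f i (x0 i) - fStar i) + σ ^ 2)
    (hindep : iIndepFun (fun i ω => g0 ω i) μ)
    -- the initial tracking variable y₀ = (1 − β) g₀
    (y0 : Ω → Stacked n p) (hy0 : ∀ ω, y0 ω = (1 - β) • g0 ω) :
    (∫ ω, fro2 (consErr (y0 ω)) ∂μ) ≤
      (1 - β) ^ 2 *
        (2 * (n : ℝ) * C * (F (rowAvg x0) - Fstar) + 2 * (n : ℝ) * C * sigf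
          + (n : ℝ) * σ ^ 2 + 2 * L * (L + C) * fro2 (consErr x0)
          + 2 * ∑ i, ‖gradient (f i) (rowAvg x0)‖ ^ 2) := by
  have hnR : (0:ℝ) < (n : ℝ) := Nat.cast_pos.mpr hn
  set xb := rowAvg x0 with hxb
  -- integrability
  have hInt_sq : ∀ i, Integrable (fun ω => ‖g0 ω i‖ ^ 2) μ := fun i =>
    (memLp_two_iff_integrable_sq_norm (hg_L2 i).aestronglyMeasurable).mp (hg_L2 i)
  -- pointwise scaling
  have hscale : ∀ ω, fro2 (consErr (y0 ω)) = (1 - β) ^ 2 * fro2 (consErr (g0 ω)) := by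
    intro ω
    rw [hy0]
    have havg : rowAvg ((1 - β) • g0 ω) = (1 - β) • rowAvg (g0 ω) := by
      unfold rowAvg
      rw [show (∑ i, ((1 - β) • g0 ω) i) = (1 - β) • ∑ i, g0 ω i by
        rw [Finset.smul_sum]; rfl]
      rw [smul_comm]
    unfold fro2 consErr
    rw [Finset.mul_sum]
    refine Finset.sum_congr rfl fun i _ => ?_
    rw [havg]
    have hrow : ((1 - β) • g0 ω) i = (1 - β) • (g0 ω i) := rfl
    rw [hrow, ← smul_sub, norm_smul, Real.norm_eq_abs, abs_of_nonneg (by linarith), mul_pow]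
  -- main bound on ∫ fro2 (consErr (g0 ω))
  have hfs : ∀ i v, fStar i ≤ f i v := fun i v => (hfStar i).1 ⟨v, rfl⟩
  have step3 : ∀ i, (∫ ω, ‖g0 ω i‖ ^ 2 ∂μ) ≤
      C * (f i (x0 i) - fStar i) + σ ^ 2 + ‖gradient (f i) (x0 i)‖ ^ 2 := by
    intro i
    rw [second_moment μ (fun ω => g0 ω i) (hg_L2 i) _ (habc_mean i)]
    have := habc_var i
    linarith
  have hIntSum : Integrable (fun ω => fro2 (g0 ω)) μ := by
    unfold fro2
    exact integrable_finset_sum _ fun i _ => hInt_sq i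
  have hD : fro2 (consErr x0) = ∑ i, ‖x0 i - xb‖ ^ 2 := rfl
  have hS1 : (∑ i, (f i xb - fStar i)) = (n:ℝ) * (F xb - Fstar) + (n:ℝ) * sigf := by
    have h1 : (∑ i, f i xb) = (n:ℝ) * F xb := by
      rw [hF]; field_simp
    have h2 : (∑ i, fStar i) = (n:ℝ) * (Fstar - sigf) := by
      have := hsigf
      field_simp at this ⊢
      linarith
    rw [Finset.sum_sub_distrib, h1, h2]
    ring
  have key : (∫ ω, fro2 (consErr (g0 ω)) ∂μ) ≤
      2 * (n : ℝ) * C * (F xb - Fstar) + 2 * (n : ℝ) * C * sigf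
        + (n : ℝ) * σ ^ 2 + 2 * L * (L + C) * fro2 (consErr x0)
        + 2 * ∑ i, ‖gradient (f i) xb‖ ^ 2 := by
    calc (∫ ω, fro2 (consErr (g0 ω)) ∂μ)
        ≤ ∫ ω, fro2 (g0 ω) ∂μ := by
          refine integral_mono_of_nonneg (ae_of_all _ fun ω => fro2_nonneg _) hIntSum
            (ae_of_all _ fun ω => fro2_consErr_le _)
      _ = ∑ i, ∫ ω, ‖g0 ω i‖ ^ 2 ∂μ := by
          unfold fro2
          rw [integral_finset_sum _ fun i _ => hInt_sq i]
      _ ≤ ∑ i, (C * (f i (x0 i) - fStar i) + σ ^ 2 + ‖gradient (f i) (x0 i)‖ ^ 2) :=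
          Finset.sum_le_sum fun i _ => step3 i
      _ ≤ ∑ i, (2 * C * (f i xb - fStar i) + (C * L + 2 * L ^ 2) * ‖x0 i - xb‖ ^ 2
            + σ ^ 2 + 2 * ‖gradient (f i) xb‖ ^ 2) := by
          refine Finset.sum_le_sum fun i _ => ?_
          have ha := fval_bound L hL (f i) (hdiff i) (hsmooth i) (fStar i) (hfs i) (x0 i) xb
          have hb := grad_diff_sq L (f i) (hsmooth i) (x0 i) xb
          have hCa : C * (f i (x0 i) - fStar i) ≤
              C * (2 * (f i xb - fStar i) + L * ‖x0 i - xb‖ ^ 2) :=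
            mul_le_mul_of_nonneg_left ha hC
          nlinarith
      _ = 2 * C * (∑ i, (f i xb - fStar i)) + (C * L + 2 * L ^ 2) * fro2 (consErr x0)
            + (n : ℝ) * σ ^ 2 + 2 * ∑ i, ‖gradient (f i) xb‖ ^ 2 := by
          rw [hD, Finset.sum_add_distrib, Finset.sum_add_distrib, Finset.sum_add_distrib,
            ← Finset.mul_sum, ← Finset.mul_sum, ← Finset.mul_sum, Finset.sum_const,
            Finset.card_univ, Fintype.card_fin, nsmul_eq_mul]
      _ ≤ 2 * (n : ℝ) * C * (F xb - Fstar) + 2 * (n : ℝ) * C * sigf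
            + (n : ℝ) * σ ^ 2 + 2 * L * (L + C) * fro2 (consErr x0)
            + 2 * ∑ i, ‖gradient (f i) xb‖ ^ 2 := by
          rw [hS1]
          have hDnn : 0 ≤ fro2 (consErr x0) := fro2_nonneg _
          nlinarith [mul_nonneg (mul_nonneg hC hL.le) hDnn]
  calc (∫ ω, fro2 (consErr (y0 ω)) ∂μ)
      = ∫ ω, (1 - β) ^ 2 * fro2 (consErr (g0 ω)) ∂μ := by
        congr 1; funext ω; exact hscale ω
    _ = (1 - β) ^ 2 * ∫ ω, fro2 (consErr (g0 ω)) ∂μ := integral_const_mul _ _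
    _ ≤ _ := mul_le_mul_of_nonneg_left key (sq_nonneg _)
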